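/- Let M be a finite set of adjacent 2-minors of chessboard type with Γ_M connected, having p vertices and q edges. If there exists a finite simple bipartite graph G (with n edges and d vertices, obtained as in the construction with d ≤ 4p − 2q and n = 4p − q) such that I_M = I_G, then, using that the codimension of I_M equals p and that the codimension of I_G equals n − d + 1, we conclude p = q + 1, i.e., Γ_M is a tree. -/

import Mathlib

open MvPolynomial

/-- The four variables (matrix positions) appearing in the adjacent 2-minor with
upper-left corner `p = (a,b)`, namely `(a,b), (a,b+1), (a+1,b), (a+1,b+1)`. -/
def cornerVars (p : ℕ × ℕ) : Finset (ℕ × ℕ) :=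
  {(p.1, p.2), (p.1, p.2 + 1), (p.1 + 1, p.2), (p.1 + 1, p.2 + 1)}

/-- All variables appearing in some minor of `M`. -/
def mVars (M : Finset (ℕ × ℕ)) : Finset (ℕ × ℕ) := M.biUnion cornerVars

lemma mem_mVars {M : Finset (ℕ × ℕ)} {p : ℕ × ℕ} (hp : p ∈ M) {v : ℕ × ℕ}
    (hv : v ∈ cornerVars p) : v ∈ mVars M := Finset.mem_biUnion.2 ⟨p, hp, hv⟩

/-- The adjacent 2-minor `[a,a+1|b,b+1] = x_{a,b}x_{a+1,b+1} − x_{a,b+1}x_{a+1,b}`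
with corner `p = (a,b) ∈ M`, as a polynomial in the variables occurring in `M`. -/
noncomputable def adjMinor (K : Type*) [Field K] (M : Finset (ℕ × ℕ)) {p : ℕ × ℕ}
    (hp : p ∈ M) : MvPolynomial (mVars M) K :=
  X ⟨(p.1, p.2), mem_mVars hp (by simp [cornerVars])⟩ *
    X ⟨(p.1 + 1, p.2 + 1), mem_mVars hp (by simp [cornerVars])⟩ -
  X ⟨(p.1, p.2 + 1), mem_mVars hp (by simp [cornerVars])⟩ *
    X ⟨(p.1 + 1, p.2), mem_mVars hp (by simp [cornerVars])⟩

/-- The ideal `I_M` generated by the adjacent 2-minors of `M`. -/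
noncomputable def idealM (K : Type*) [Field K] (M : Finset (ℕ × ℕ)) :
    Ideal (MvPolynomial (mVars M) K) :=
  Ideal.span {f | ∃ (p : ℕ × ℕ) (hp : p ∈ M), f = adjMinor K M hp}

/-- The squarefree quadratic monomial `tᵢ·tⱼ` attached to an (unordered) edge `{i,j}`. -/
noncomputable def edgeMonomial (K : Type*) [Field K] {V : Type*} (e : Sym2 V) :
    MvPolynomial V K :=
  Sym2.lift ⟨fun i j => X i * X j, fun _ _ => mul_comm _ _⟩ e

/-- The monomial map sending each edge-variable to the product of its endpoints. -/
noncomputable def toricMap (K : Type*) [Field K] {σ V : Type*} (e : σ → Sym2 V) :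
    MvPolynomial σ K →ₐ[K] MvPolynomial V K :=
  aeval fun v => edgeMonomial K (e v)

/-- `I_M` is the toric ideal of a finite simple graph: there is a graph `G` whose
edges are labelled bijectively by the variables occurring in `M`, with
`I_M = I_G = ker (x_v ↦ tᵢtⱼ)`. -/
def IsToricOfGraph (K : Type*) [Field K] (M : Finset (ℕ × ℕ)) : Prop :=
  ∃ (d : ℕ) (G : SimpleGraph (Fin d)) (e : mVars M → Sym2 (Fin d)),
    Function.Injective e ∧ G.edgeSet = Set.range e ∧
    idealM K M = RingHom.ker (toricMap K e).toRingHom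

/-- `M` is of chessboard type. -/
def Chessboard (M : Finset (ℕ × ℕ)) : Prop :=
  ∀ p ∈ M, ∀ q ∈ M,
    (p.1 = q.1 → p.2 < q.2 → p.2 + 1 < q.2) ∧
    (p.2 = q.2 → p.1 < q.1 → p.1 + 1 < q.1)

/-- The intersection graph `Γ_M`: two distinct minors are adjacent iff their row index
pairs `{a,a+1},{a',a'+1}` intersect and their column index pairs intersect. -/
def interGraph (M : Finset (ℕ × ℕ)) : SimpleGraph {x // x ∈ M} :=
  SimpleGraph.fromRel fun p q =>
    (p : ℕ × ℕ).1 ≤ (q : ℕ × ℕ).1 + 1 ∧ (q : ℕ × ℕ).1 ≤ (p : ℕ × ℕ).1 + 1 ∧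
    (p : ℕ × ℕ).2 ≤ (q : ℕ × ℕ).2 + 1 ∧ (q : ℕ × ℕ).2 ≤ (p : ℕ × ℕ).2 + 1

/-- `G` has no cycle of length 4. -/
def NoFourCycle {V : Type*} (G : SimpleGraph V) : Prop :=
  ¬ ∃ (u : V) (w : G.Walk u u), w.IsCycle ∧ w.length = 4

/-- Each connected component of `G` possesses at most one cycle: any two cycles lying
in the same connected component have the same edge set. -/
def AtMostOneCyclePerComponent {V : Type*} (G : SimpleGraph V) : Prop :=
  ∀ (u v : V) (w₁ : G.Walk u u) (w₂ : G.Walk v v),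
    w₁.IsCycle → w₂.IsCycle → G.Reachable u v →
    ∀ e, e ∈ w₁.edges ↔ e ∈ w₂.edges

section AuxGraph
open SimpleGraph

lemma reachable_of_delete {V : Type*} {G : SimpleGraph V} {v w : V}
    (hR : (G \ fromEdgeSet {s(v, w)}).Reachable v w) {a b : V} (h : G.Reachable a b) :
    (G \ fromEdgeSet {s(v, w)}).Reachable a b := by
  obtain ⟨p⟩ := h
  induction p with
  | nil => exact Reachable.refl _
  | cons h q ih =>
    rename_i x y z
    refine Reachable.trans ?_ ih
    by_cases he : s(x, y) = s(v, w)
    · rw [Sym2.eq_iff] at he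
      rcases he with ⟨rfl, rfl⟩ | ⟨rfl, rfl⟩
      · exact hR
      · exact hR.symm
    · exact Adj.reachable ⟨h, by simp [fromEdgeSet_adj, he]⟩

lemma connected_card_le {V : Type*} [Fintype V] :
    ∀ (n : ℕ) (G : SimpleGraph V) [Fintype G.edgeSet], G.edgeFinset.card = n → G.Connected →
      Fintype.card V ≤ n + 1 ∧ (Fintype.card V = n + 1 → G.IsAcyclic) := by
  intro n
  induction n using Nat.strong_induction_on with
  | _ n ih =>
    intro G _ hn hconn
    by_cases hac : G.IsAcyclic
    · have ht : G.IsTree := ⟨hconn, hac⟩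
      have h2 := ht.card_edgeFinset
      rw [hn] at h2
      exact ⟨by omega, fun _ => hac⟩
    · rw [isAcyclic_iff_forall_adj_isBridge] at hac
      push_neg at hac
      obtain ⟨v, w, hadj, hbr⟩ := hac
      rw [isBridge_iff] at hbr
      push_neg at hbr
      have hR : (G \ fromEdgeSet {s(v, w)}).Reachable v w := hbr
      set G' := G \ fromEdgeSet {s(v, w)} with hG'
      have hne : Nonempty V := hconn.nonempty
      have hconn' : G'.Connected :=
        Connected.mk fun a b => reachable_of_delete hR (hconn.preconnected a b)
      classical
      have hFE : Fintype G'.edgeSet := Fintype.ofFinite _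
      have hsub : G'.edgeFinset = G.edgeFinset.erase s(v, w) := by
        ext e
        simp only [Finset.mem_erase, mem_edgeFinset, hG', edgeSet_sdiff, edgeSet_fromEdgeSet,
          Set.mem_diff, Set.mem_setOf_eq]
        simp only [Set.mem_diff, Set.mem_singleton_iff]
        constructor
        · rintro ⟨he, hne⟩
          exact ⟨fun h => hne ⟨h, G.not_isDiag_of_mem_edgeSet he⟩, he⟩
        · rintro ⟨hne, he⟩
          exact ⟨he, fun h => hne h.1⟩
      have hcard : G'.edgeFinset.card = n - 1 := by
        rw [hsub, Finset.card_erase_of_mem (by simpa using hadj), hn]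
      have hn1 : 1 ≤ n := by
        rw [← hn]
        exact Finset.card_pos.2 ⟨s(v, w), by simpa using hadj⟩
      have := ih (n - 1) (by omega) G' hcard hconn'
      exact ⟨by omega, by omega⟩

end AuxGraph

section AuxChess
open SimpleGraph
lemma mem_cornerVars_iff {R v : ℕ × ℕ} :
    v ∈ cornerVars R ↔ (R.1 = v.1 ∨ R.1 + 1 = v.1) ∧ (R.2 = v.2 ∨ R.2 + 1 = v.2) := by
  simp only [cornerVars, Finset.mem_insert, Finset.mem_singleton, Prod.ext_iff]
  omega

lemma cornerVars_card (P : ℕ × ℕ) : (cornerVars P).card = 4 := by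
  simp only [cornerVars]
  rw [Finset.card_insert_of_notMem (by simp [Prod.ext_iff]),
    Finset.card_insert_of_notMem (by simp [Prod.ext_iff]),
    Finset.card_insert_of_notMem (by simp [Prod.ext_iff]), Finset.card_singleton]

section
variable {M : Finset (ℕ × ℕ)}

/-- the chessboard condition on a pair, in arithmetic form -/
lemma chess_arith (hM : Chessboard M) {P Q : ℕ × ℕ} (hP : P ∈ M) (hQ : Q ∈ M) :
    (P.1 = Q.1 → P.2 < Q.2 → P.2 + 1 < Q.2) ∧ (P.2 = Q.2 → P.1 < Q.1 → P.1 + 1 < Q.1) :=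
  hM P hP Q hQ

lemma shared_core (hM : Chessboard M) {P Q : ℕ × ℕ} (hP : P ∈ M) (hQ : Q ∈ M) (hne : P ≠ Q)
    {v : ℕ × ℕ} (h1 : v ∈ cornerVars P) (h2 : v ∈ cornerVars Q) : P.1 ≠ Q.1 ∧ P.2 ≠ Q.2 := by
  rw [mem_cornerVars_iff] at h1 h2
  have c1 := chess_arith hM hP hQ
  have c2 := chess_arith hM hQ hP
  have hne' : P.1 ≠ Q.1 ∨ P.2 ≠ Q.2 := by
    by_contra h
    push_neg at h
    exact hne (Prod.ext h.1 h.2)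
  omega

noncomputable def mult (M : Finset (ℕ × ℕ)) (v : ℕ × ℕ) : ℕ :=
  (M.filter fun P => v ∈ cornerVars P).card

lemma mult_le_two (hM : Chessboard M) (v : ℕ × ℕ) : mult M v ≤ 2 := by
  by_contra h
  push_neg at h
  rw [mult, Finset.two_lt_card] at h
  obtain ⟨a, ha, b, hb, c, hc, hab, hac, hbc⟩ := h
  simp only [Finset.mem_filter] at ha hb hc
  obtain ⟨hab1, -⟩ := shared_core hM ha.1 hb.1 hab ha.2 hb.2
  obtain ⟨hac1, -⟩ := shared_core hM ha.1 hc.1 hac ha.2 hc.2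
  obtain ⟨hbc1, -⟩ := shared_core hM hb.1 hc.1 hbc hb.2 hc.2
  rw [mem_cornerVars_iff] at ha hb hc
  have h1 := ha.2.1
  have h2 := hb.2.1
  have h3 := hc.2.1
  omega

lemma mult_pos_of_mem {v : ℕ × ℕ} (hv : v ∈ mVars M) : 1 ≤ mult M v := by
  rw [mVars, Finset.mem_biUnion] at hv
  obtain ⟨P, hP, hPv⟩ := hv
  exact Finset.card_pos.2 ⟨P, Finset.mem_filter.2 ⟨hP, hPv⟩⟩

/-- adjacency in the intersection graph means diagonal adjacency, for chessboard `M` -/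
lemma adj_diag (hM : Chessboard M) {P Q : {x // x ∈ M}} (h : (interGraph M).Adj P Q) :
    ((P : ℕ × ℕ).1 ≠ (Q : ℕ × ℕ).1 ∧ (P : ℕ × ℕ).1 ≤ (Q : ℕ × ℕ).1 + 1 ∧ (Q : ℕ × ℕ).1 ≤ (P : ℕ × ℕ).1 + 1) ∧
    ((P : ℕ × ℕ).2 ≠ (Q : ℕ × ℕ).2 ∧ (P : ℕ × ℕ).2 ≤ (Q : ℕ × ℕ).2 + 1 ∧ (Q : ℕ × ℕ).2 ≤ (P : ℕ × ℕ).2 + 1) := by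
  rw [interGraph, fromRel_adj] at h
  obtain ⟨hne, hr⟩ := h
  have hr' : (P : ℕ × ℕ).1 ≤ (Q : ℕ × ℕ).1 + 1 ∧ (Q : ℕ × ℕ).1 ≤ (P : ℕ × ℕ).1 + 1 ∧
      (P : ℕ × ℕ).2 ≤ (Q : ℕ × ℕ).2 + 1 ∧ (Q : ℕ × ℕ).2 ≤ (P : ℕ × ℕ).2 + 1 := by tauto
  have hne' : (P : ℕ × ℕ) ≠ (Q : ℕ × ℕ) := fun hh => hne (Subtype.ext hh)
  have hne'' : (P : ℕ × ℕ).1 ≠ (Q : ℕ × ℕ).1 ∨ (P : ℕ × ℕ).2 ≠ (Q : ℕ × ℕ).2 := by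
    by_contra hcon
    push_neg at hcon
    exact hne' (Prod.ext hcon.1 hcon.2)
  have c1 := chess_arith hM P.2 Q.2
  have c2 := chess_arith hM Q.2 P.2
  omega

/-- the shared corner of a diagonally adjacent pair -/
noncomputable def sharedCorner : Sym2 {x // x ∈ M} → ℕ × ℕ :=
  Sym2.lift ⟨fun P Q => (max (P : ℕ × ℕ).1 (Q : ℕ × ℕ).1, max (P : ℕ × ℕ).2 (Q : ℕ × ℕ).2),
    fun P Q => by simp [max_comm]⟩

lemma sharedCorner_mem (hM : Chessboard M) {P Q : {x // x ∈ M}} (h : (interGraph M).Adj P Q) :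
    sharedCorner s(P, Q) ∈ cornerVars (P : ℕ × ℕ) ∧ sharedCorner s(P, Q) ∈ cornerVars (Q : ℕ × ℕ) := by
  obtain ⟨⟨h1, h2, h3⟩, h4, h5, h6⟩ := adj_diag hM h
  rw [mem_cornerVars_iff, mem_cornerVars_iff]
  simp only [sharedCorner, Sym2.lift_mk]
  omega

lemma filter_eq_pair (hM : Chessboard M) {P Q : {x // x ∈ M}} (h : (interGraph M).Adj P Q) :
    (M.filter fun R => sharedCorner s(P, Q) ∈ cornerVars R) = {(P : ℕ × ℕ), (Q : ℕ × ℕ)} := by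
  have hmem := sharedCorner_mem hM h
  have hPQ : (P : ℕ × ℕ) ≠ (Q : ℕ × ℕ) := by
    intro hh
    exact ((interGraph M).ne_of_adj h) (Subtype.ext hh)
  apply Finset.Subset.antisymm
  · intro R hR
    simp only [Finset.mem_filter] at hR
    simp only [Finset.mem_insert, Finset.mem_singleton]
    by_contra hcon
    push_neg at hcon
    obtain ⟨hRP, hRQ⟩ := hcon
    obtain ⟨e1, -⟩ := shared_core hM hR.1 P.2 hRP hR.2 hmem.1
    obtain ⟨e2, -⟩ := shared_core hM hR.1 Q.2 hRQ hR.2 hmem.2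
    obtain ⟨e3, -⟩ := shared_core hM P.2 Q.2 hPQ hmem.1 hmem.2
    have a1 := mem_cornerVars_iff.1 hR.2
    have a2 := mem_cornerVars_iff.1 hmem.1
    have a3 := mem_cornerVars_iff.1 hmem.2
    omega
  · intro R hR
    simp only [Finset.mem_insert, Finset.mem_singleton] at hR
    rcases hR with rfl | rfl
    · exact Finset.mem_filter.2 ⟨P.2, hmem.1⟩
    · exact Finset.mem_filter.2 ⟨Q.2, hmem.2⟩

lemma mult_sharedCorner (hM : Chessboard M) {P Q : {x // x ∈ M}}
    (h : (interGraph M).Adj P Q) : mult M (sharedCorner s(P, Q)) = 2 := by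
  rw [mult, filter_eq_pair hM h]
  rw [Finset.card_insert_of_notMem (by
    simp only [Finset.mem_singleton]
    intro hh
    exact ((interGraph M).ne_of_adj h) (Subtype.ext hh)), Finset.card_singleton]

lemma step_C (hM : Chessboard M) :
    (interGraph M).edgeSet.ncard = ((mVars M).filter fun v => mult M v = 2).card := by
  classical
  have : Fintype (interGraph M).edgeSet := Fintype.ofFinite _
  rw [Set.ncard_eq_toFinset_card' _]
  refine Finset.card_bij (fun e _ => sharedCorner e) ?_ ?_ ?_
  · intro e he
    induction e using Sym2.ind with
    | _ P Q =>
      rw [Set.mem_toFinset, mem_edgeSet] at he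
      refine Finset.mem_filter.2 ⟨mem_mVars P.2 (sharedCorner_mem hM he).1, mult_sharedCorner hM he⟩
  · intro e1 he1 e2 he2
    induction e1 using Sym2.ind with
    | _ P1 Q1 =>
      induction e2 using Sym2.ind with
      | _ P2 Q2 =>
        intro hF
        replace hF : sharedCorner s(P1, Q1) = sharedCorner s(P2, Q2) := hF
        rw [Set.mem_toFinset, mem_edgeSet] at he1 he2
        have hp1 := filter_eq_pair hM he1
        have hp2 := filter_eq_pair hM he2
        rw [hF, hp2] at hp1
        have h12 : (P1 : ℕ × ℕ) = P2 ∨ (P1 : ℕ × ℕ) = Q2 := by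
          have : (P1 : ℕ × ℕ) ∈ ({(P2 : ℕ × ℕ), (Q2 : ℕ × ℕ)} : Finset _) := by
            rw [hp1]; simp
          simpa using this
        have h12' : (Q1 : ℕ × ℕ) = P2 ∨ (Q1 : ℕ × ℕ) = Q2 := by
          have : (Q1 : ℕ × ℕ) ∈ ({(P2 : ℕ × ℕ), (Q2 : ℕ × ℕ)} : Finset _) := by
            rw [hp1]; simp
          simpa using this
        have hne1 : (P1 : ℕ × ℕ) ≠ (Q1 : ℕ × ℕ) := fun hh =>
          ((interGraph M).ne_of_adj he1) (Subtype.ext hh)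
        rw [Sym2.eq_iff]
        rcases h12 with h | h <;> rcases h12' with h' | h'
        · exact absurd (h.trans h'.symm) hne1
        · exact Or.inl ⟨Subtype.ext h, Subtype.ext h'⟩
        · exact Or.inr ⟨Subtype.ext h, Subtype.ext h'⟩
        · exact absurd (h.trans h'.symm) hne1
  · intro v hv
    rw [Finset.mem_filter] at hv
    obtain ⟨hv1, hv2⟩ := hv
    rw [mult] at hv2
    obtain ⟨P, Q, hPQ, hset⟩ := Finset.card_eq_two.1 hv2
    have hPmem : P ∈ M ∧ v ∈ cornerVars P := by
      have : P ∈ M.filter fun R => v ∈ cornerVars R := by rw [hset]; simp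
      simpa using this
    have hQmem : Q ∈ M ∧ v ∈ cornerVars Q := by
      have : Q ∈ M.filter fun R => v ∈ cornerVars R := by rw [hset]; simp
      simpa using this
    have hcore := shared_core hM hPmem.1 hQmem.1 hPQ hPmem.2 hQmem.2
    have a1 := mem_cornerVars_iff.1 hPmem.2
    have a2 := mem_cornerVars_iff.1 hQmem.2
    have hadj : (interGraph M).Adj ⟨P, hPmem.1⟩ ⟨Q, hQmem.1⟩ := by
      rw [interGraph, fromRel_adj]
      refine ⟨fun hh => hPQ (congrArg Subtype.val hh), Or.inl ?_⟩
      simp only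
      omega
    refine ⟨s(⟨P, hPmem.1⟩, ⟨Q, hQmem.1⟩), ?_, ?_⟩
    · rw [Set.mem_toFinset, mem_edgeSet]
      exact hadj
    · simp only [sharedCorner, Sym2.lift_mk]
      have : v = (v.1, v.2) := rfl
      rw [this]
      rw [Prod.ext_iff]
      constructor <;> simp only <;> omega

lemma chess_count (hM : Chessboard M) :
    4 * M.card = (mVars M).card + (interGraph M).edgeSet.ncard := by
  classical
  have key : ∑ P ∈ M, (cornerVars P).card = ∑ v ∈ mVars M, mult M v := by
    have : ∀ P ∈ M, (cornerVars P).card = ((mVars M).filter fun v => v ∈ cornerVars P).card := by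
      intro P hP
      congr 1
      rw [Finset.filter_mem_eq_inter, Finset.inter_eq_right.2 fun v hv => mem_mVars hP hv]
    rw [Finset.sum_congr rfl this]
    simp only [Finset.card_filter, mult]
    rw [Finset.sum_comm]
  have lhs : ∑ P ∈ M, (cornerVars P).card = 4 * M.card := by
    rw [Finset.sum_congr rfl fun P _ => cornerVars_card P, Finset.sum_const, smul_eq_mul,
      mul_comm]
  have rhs : ∑ v ∈ mVars M, mult M v =
      (mVars M).card + ((mVars M).filter fun v => mult M v = 2).card := by
    have h1 : ∀ v ∈ mVars M, mult M v = 1 + (if mult M v = 2 then 1 else 0) := by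
      intro v hv
      have := mult_le_two hM v
      have := mult_pos_of_mem hv
      split <;> omega
    rw [Finset.sum_congr rfl h1, Finset.sum_add_distrib, Finset.card_filter,
      Finset.sum_const, smul_eq_mul, mul_one]
  rw [← lhs, key, rhs, step_C hM]

end

end AuxChess

section AuxAlg
noncomputable def sym2Finsupp {V : Type*} : Sym2 V → (V →₀ ℕ) :=
  Sym2.lift ⟨fun i j => Finsupp.single i 1 + Finsupp.single j 1, fun i j => add_comm _ _⟩

lemma edgeMonomial_eq (K : Type*) [Field K] {V : Type*} (s : Sym2 V) :
    edgeMonomial K s = monomial (sym2Finsupp s) 1 := by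
  have hX : ∀ n : V, (X n : MvPolynomial V K) = monomial (Finsupp.single n 1) 1 :=
    fun n => by rw [← X_pow_eq_monomial, pow_one]
  induction s using Sym2.ind with
  | _ i j =>
    rw [edgeMonomial, Sym2.lift_mk, sym2Finsupp, Sym2.lift_mk]
    show (X i * X j : MvPolynomial V K) = monomial (Finsupp.single i 1 + Finsupp.single j 1) 1
    rw [hX, hX, monomial_mul, one_mul]

lemma prod_monomial_one (K : Type*) [Field K] {ι τ : Type*} (s : Finset ι) (h : ι → (τ →₀ ℕ)) :
    (∏ i ∈ s, (monomial (h i) (1 : K) : MvPolynomial τ K)) = monomial (∑ i ∈ s, h i) 1 := by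
  induction s using Finset.cons_induction with
  | empty => simp
  | cons a s ha ih => rw [Finset.prod_cons, ih, monomial_mul, one_mul, Finset.sum_cons]

lemma aeval_monomial_map (K : Type*) [Field K] {σ' τ : Type*} (g : σ' → (τ →₀ ℕ))
    (u : σ' →₀ ℕ) :
    aeval (fun x => (monomial (g x) (1 : K) : MvPolynomial τ K)) (monomial u (1 : K)) =
      monomial (u.sum fun x n => n • g x) (1 : K) := by
  rw [aeval_monomial, map_one, one_mul, Finsupp.prod, Finsupp.sum]
  have h2 : (∏ x ∈ u.support, (monomial (g x) (1:K) : MvPolynomial τ K) ^ u x) =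
      ∏ x ∈ u.support, (monomial (u x • g x) (1:K) : MvPolynomial τ K) :=
    Finset.prod_congr rfl fun x _ => by rw [monomial_pow, one_pow]
  rw [h2, prod_monomial_one]

lemma toricMap_monomial (K : Type*) [Field K] {σ' V : Type*} (e : σ' → Sym2 V)
    (u : σ' →₀ ℕ) :
    toricMap K e (monomial u (1 : K)) =
      monomial (u.sum fun x n => n • sym2Finsupp (e x)) 1 := by
  have : (fun v => edgeMonomial K (e v)) =
      fun v => (monomial (sym2Finsupp (e v)) (1 : K) : MvPolynomial V K) :=
    funext fun v => edgeMonomial_eq K (e v)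
  rw [toricMap, this, aeval_monomial_map]

lemma aeval_single_map (K : Type*) [Field K] {σ' Q : Type*} [AddCommMonoid Q] (g : σ' → Q)
    (u : σ' →₀ ℕ) :
    aeval (fun x => (AddMonoidAlgebra.single (g x) (1 : K))) (monomial u (1 : K)) =
      AddMonoidAlgebra.single (u.sum fun x n => n • g x) (1 : K) := by
  rw [aeval_monomial, map_one, one_mul, Finsupp.prod, Finsupp.sum]
  have h2 : (∏ x ∈ u.support, AddMonoidAlgebra.single (g x) (1:K) ^ u x) =
      ∏ x ∈ u.support, AddMonoidAlgebra.single (u x • g x) (1:K) :=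
    Finset.prod_congr rfl fun x _ => by rw [AddMonoidAlgebra.single_pow, one_pow]
  rw [h2, AddMonoidAlgebra.prod_single, Finset.prod_const_one]

/-! ### the lattice of minor vectors -/

noncomputable def minorVec (M : Finset (ℕ × ℕ)) {P : ℕ × ℕ} (hP : P ∈ M) :
    {x // x ∈ mVars M} → ℚ :=
  Pi.single ⟨(P.1, P.2), mem_mVars hP (by simp [cornerVars])⟩ 1 +
    Pi.single ⟨(P.1 + 1, P.2 + 1), mem_mVars hP (by simp [cornerVars])⟩ 1 -
    Pi.single ⟨(P.1, P.2 + 1), mem_mVars hP (by simp [cornerVars])⟩ 1 -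
    Pi.single ⟨(P.1 + 1, P.2), mem_mVars hP (by simp [cornerVars])⟩ 1

noncomputable def minorSpan (M : Finset (ℕ × ℕ)) : Submodule ℚ ({x // x ∈ mVars M} → ℚ) :=
  Submodule.span ℚ {w | ∃ (P : ℕ × ℕ) (hP : P ∈ M), w = minorVec M hP}

noncomputable def psi (K : Type*) [Field K] (M : Finset (ℕ × ℕ)) :
    MvPolynomial (mVars M) K →ₐ[K]
      AddMonoidAlgebra K (({x // x ∈ mVars M} → ℚ) ⧸ minorSpan M) :=
  aeval fun x => AddMonoidAlgebra.single (Submodule.Quotient.mk (Pi.single x 1)) 1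

lemma key_exp (M : Finset (ℕ × ℕ)) (u : {x // x ∈ mVars M} →₀ ℕ) :
    (u.sum fun x n => n • Submodule.Quotient.mk (p := minorSpan M) (Pi.single x (1 : ℚ))) =
      Submodule.Quotient.mk (fun x => (u x : ℚ)) := by
  classical
  rw [Finsupp.sum_fintype _ _ (fun _ => by simp)]
  have h1 : ∀ x, (u x) • Submodule.Quotient.mk (p := minorSpan M) (Pi.single x (1 : ℚ)) =
      Submodule.Quotient.mk (Pi.single x (u x : ℚ)) := by
    intro x
    rw [← Nat.cast_smul_eq_nsmul ℚ, ← Submodule.Quotient.mk_smul, ← Pi.single_smul,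
      smul_eq_mul, mul_one]
  rw [Finset.sum_congr rfl fun x _ => h1 x]
  simp only [← Submodule.mkQ_apply, ← map_sum]
  congr 1
  exact Finset.univ_sum_single _

lemma psi_monomial (K : Type*) [Field K] (M : Finset (ℕ × ℕ)) (u : {x // x ∈ mVars M} →₀ ℕ) :
    psi K M (monomial u 1) =
      AddMonoidAlgebra.single (Submodule.Quotient.mk (fun x => (u x : ℚ))) 1 := by
  rw [psi, aeval_single_map, key_exp]

lemma psi_kills (K : Type*) [Field K] (M : Finset (ℕ × ℕ)) :
    idealM K M ≤ RingHom.ker (psi K M).toRingHom := by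
  rw [idealM, Ideal.span_le]
  rintro f ⟨P, hP, rfl⟩
  rw [SetLike.mem_coe, RingHom.mem_ker]
  rw [adjMinor]
  simp only [map_sub, map_mul, AlgHom.toRingHom_eq_coe, RingHom.coe_coe]
  simp only [show ∀ y : {x // x ∈ mVars M}, psi K M (X y) =
      AddMonoidAlgebra.single (Submodule.Quotient.mk (p := minorSpan M) (Pi.single y 1)) 1 from
    fun y => by rw [psi, aeval_X]]
  rw [AddMonoidAlgebra.single_mul_single, AddMonoidAlgebra.single_mul_single, one_mul,
    ← Submodule.Quotient.mk_add, ← Submodule.Quotient.mk_add]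
  rw [show Submodule.Quotient.mk (p := minorSpan M)
      (Pi.single ⟨(P.1, P.2), mem_mVars hP (by simp [cornerVars])⟩ 1 +
        Pi.single ⟨(P.1 + 1, P.2 + 1), mem_mVars hP (by simp [cornerVars])⟩ 1) =
      Submodule.Quotient.mk
      (Pi.single ⟨(P.1, P.2 + 1), mem_mVars hP (by simp [cornerVars])⟩ 1 +
        Pi.single ⟨(P.1 + 1, P.2), mem_mVars hP (by simp [cornerVars])⟩ 1) from
    (Submodule.Quotient.eq _).2 (Submodule.subset_span ⟨P, hP, by rw [minorVec]; abel⟩)]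
  exact sub_self _

lemma span_eq_finset (M : Finset (ℕ × ℕ)) :
    {w | ∃ (P : ℕ × ℕ) (hP : P ∈ M), w = minorVec M hP} =
      ↑(M.attach.image fun P => minorVec M P.2) := by
  ext w
  simp only [Set.mem_setOf_eq, Finset.coe_image, Set.mem_image, Finset.mem_coe,
    Finset.mem_attach, true_and, Subtype.exists]
  constructor
  · rintro ⟨P, hP, rfl⟩
    exact ⟨P, hP, rfl⟩
  · rintro ⟨P, hP, rfl⟩
    exact ⟨P, hP, rfl⟩

lemma minorSpan_finrank (M : Finset (ℕ × ℕ)) :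
    Module.finrank ℚ (minorSpan M) ≤ M.card := by
  rw [minorSpan, span_eq_finset]
  refine le_trans (finrank_span_finset_le_card _) ?_
  exact le_trans Finset.card_image_le (le_of_eq (Finset.card_attach))

lemma algebra_bound (K : Type*) [Field K] (M : Finset (ℕ × ℕ)) {d : ℕ}
    (G : SimpleGraph (Fin d)) (e : mVars M → Sym2 (Fin d))
    (hrange : G.edgeSet = Set.range e) (hGconn : G.Connected) (hcol : G.Colorable 2)
    (hIdeal : idealM K M = RingHom.ker (toricMap K e).toRingHom) :
    (mVars M).card + 1 ≤ d + M.card := by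
  classical
  set B : Matrix (Fin d) {y // y ∈ mVars M} ℚ := fun v' x => (sym2Finsupp (e x) v' : ℚ) with hB
  set A : ({y // y ∈ mVars M} → ℚ) →ₗ[ℚ] (Fin d → ℚ) := B.mulVecLin with hA
  -- ### kernel of A is inside the span of the minor vectors
  have hker : LinearMap.ker A ≤ minorSpan M := by
    intro w hw
    rw [LinearMap.mem_ker] at hw
    set N : ℕ := ∏ x : {y // y ∈ mVars M}, (w x).den with hNdef
    have hN0 : (N : ℚ) ≠ 0 := by
      rw [hNdef]
      push_cast
      exact Finset.prod_ne_zero_iff.2 fun x _ => Nat.cast_ne_zero.2 (w x).den_nz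
    have hdvd : ∀ x : {y // y ∈ mVars M}, ∃ c : ℤ, (N : ℤ) = ((w x).den : ℤ) * c := by
      intro x
      obtain ⟨c, hc⟩ := Finset.dvd_prod_of_mem (fun x : {y // y ∈ mVars M} => (w x).den) (Finset.mem_univ x)
      exact ⟨(c : ℤ), by rw [hNdef]; exact_mod_cast congrArg (Nat.cast : ℕ → ℤ) hc⟩
    choose c hc using hdvd
    set z : {y // y ∈ mVars M} → ℤ := fun x => (w x).num * c x with hzdef
    have hz : ∀ x, (z x : ℚ) = N * w x := by
      intro x
      have hNq : (N : ℚ) = ((w x).den : ℚ) * (c x : ℚ) := by exact_mod_cast hc x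
      calc (z x : ℚ) = ((w x).num : ℚ) * c x := by rw [hzdef]; push_cast; ring
        _ = (w x * (w x).den) * c x := by rw [Rat.mul_den_eq_num]
        _ = N * w x := by rw [hNq]; ring
    set u : {y // y ∈ mVars M} → ℕ := fun x => (z x).toNat with hudef
    set v : {y // y ∈ mVars M} → ℕ := fun x => (-z x).toNat with hvdef
    have huv : ∀ x, (u x : ℤ) - (v x : ℤ) = z x := fun x => Int.toNat_sub_toNat_neg (z x)
    have huvq : ∀ x, (u x : ℚ) - (v x : ℚ) = (N : ℚ) * w x := by
      intro x
      rw [← hz x, ← huv x]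
      push_cast
      ring
    set uF : {y // y ∈ mVars M} →₀ ℕ := Finsupp.equivFunOnFinite.symm u with huF
    set vF : {y // y ∈ mVars M} →₀ ℕ := Finsupp.equivFunOnFinite.symm v with hvF
    have huFa : ∀ x, uF x = u x := fun x => rfl
    have hvFa : ∀ x, vF x = v x := fun x => rfl
    have hexp : (uF.sum fun x n => n • sym2Finsupp (e x)) =
        (vF.sum fun x n => n • sym2Finsupp (e x)) := by
      ext y
      rw [Finsupp.sum_apply, Finsupp.sum_apply,
        Finsupp.sum_fintype _ _ (fun _ => by simp), Finsupp.sum_fintype _ _ (fun _ => by simp)]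
      simp only [Finsupp.smul_apply, smul_eq_mul, huFa, hvFa]
      have h0 : ∑ x : {y // y ∈ mVars M}, (sym2Finsupp (e x) y : ℚ) * w x = 0 := by
        have := congrFun hw y
        change (Matrix.mulVec B w) y = 0 at this
        simpa [hA, hB, Matrix.mulVecLin_apply, Matrix.mulVec, dotProduct] using this
      have h1 : ∑ x : {y // y ∈ mVars M}, ((u x : ℚ) - (v x : ℚ)) * (sym2Finsupp (e x) y : ℚ) = 0 := by
        calc ∑ x : {y // y ∈ mVars M}, ((u x : ℚ) - (v x : ℚ)) * (sym2Finsupp (e x) y : ℚ)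
            = ∑ x : {y // y ∈ mVars M}, (N : ℚ) * ((sym2Finsupp (e x) y : ℚ) * w x) := by
              exact Finset.sum_congr rfl fun x _ => by rw [huvq x]; ring
          _ = (N : ℚ) * ∑ x : {y // y ∈ mVars M}, (sym2Finsupp (e x) y : ℚ) * w x := by
              rw [Finset.mul_sum]
          _ = 0 := by rw [h0, mul_zero]
      have h2 : ∑ x : {y // y ∈ mVars M}, (u x : ℚ) * (sym2Finsupp (e x) y : ℚ) =
          ∑ x : {y // y ∈ mVars M}, (v x : ℚ) * (sym2Finsupp (e x) y : ℚ) := by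
        rw [← sub_eq_zero, ← Finset.sum_sub_distrib, ← h1]
        exact Finset.sum_congr rfl fun x _ => by ring
      have hq : ((∑ x : {y // y ∈ mVars M}, u x * sym2Finsupp (e x) y : ℕ) : ℚ) =
          ((∑ x : {y // y ∈ mVars M}, v x * sym2Finsupp (e x) y : ℕ) : ℚ) := by
        push_cast
        exact h2
      exact_mod_cast hq
    have hbin : (monomial uF (1 : K) - monomial vF 1) ∈ idealM K M := by
      rw [hIdeal, RingHom.mem_ker]
      simp only [AlgHom.toRingHom_eq_coe, RingHom.coe_coe, map_sub]
      rw [toricMap_monomial, toricMap_monomial, hexp, sub_self]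
    have hps := psi_kills K M hbin
    rw [RingHom.mem_ker] at hps
    simp only [AlgHom.toRingHom_eq_coe, RingHom.coe_coe, map_sub] at hps
    rw [psi_monomial, psi_monomial, sub_eq_zero] at hps
    have hmk := ((AddMonoidAlgebra.single_inj.1 hps).resolve_right
      (fun hcon => one_ne_zero hcon.1)).1
    rw [Submodule.Quotient.eq] at hmk
    have hdiff : (fun x => (uF x : ℚ)) - (fun x => (vF x : ℚ)) = (N : ℚ) • w := by
      funext x
      simp only [Pi.sub_apply, Pi.smul_apply, smul_eq_mul, huFa, hvFa]
      exact huvq x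
    rw [hdiff] at hmk
    have hw' : w = (N : ℚ)⁻¹ • ((N : ℚ) • w) := by
      rw [smul_smul, inv_mul_cancel₀ hN0, one_smul]
    rw [hw']
    exact Submodule.smul_mem _ _ hmk
  -- ### range of A has corank at least one (bipartiteness)
  have hd1 : 1 ≤ d := by
    have : Nonempty (Fin d) := hGconn.nonempty
    exact (by simpa using Fintype.card_pos (α := Fin d) : 0 < d)
  obtain ⟨cG⟩ := hcol
  set sgn : Fin 2 → ℚ := fun t => if t = 0 then 1 else -1 with hsgn
  have hsgn_ne : ∀ t, sgn t ≠ 0 := by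
    intro t
    fin_cases t <;> norm_num [hsgn]
  have hsgn_add : ∀ a b : Fin 2, a ≠ b → sgn a + sgn b = 0 := by
    intro a b hab
    fin_cases a <;> fin_cases b <;> first | (exfalso; exact hab rfl) | norm_num [hsgn]
  set g : (Fin d → ℚ) →ₗ[ℚ] ℚ := ∑ v' : Fin d, sgn (cG v') • LinearMap.proj v' with hg
  have hg_apply : ∀ w : Fin d → ℚ, g w = ∑ v' : Fin d, sgn (cG v') * w v' := by
    intro w
    rw [hg]
    simp [LinearMap.sum_apply, LinearMap.proj_apply, smul_eq_mul]
  have hrep : ∀ s : Sym2 (Fin d), ∃ i j, s = s(i, j) :=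
    fun s => Sym2.ind (fun i j => ⟨i, j, rfl⟩) s
  have hcB : ∀ x : {y // y ∈ mVars M}, ∑ v' : Fin d, sgn (cG v') * B v' x = 0 := by
    intro x
    obtain ⟨i, j, hij⟩ := hrep (e x)
    have hadj : G.Adj i j := by
      rw [← SimpleGraph.mem_edgeSet, ← hij, hrange]
      exact Set.mem_range_self x
    have hBval : ∀ v', B v' x =
        ((Finsupp.single i 1 + Finsupp.single j 1 : Fin d →₀ ℕ) v' : ℚ) := by
      intro v'
      rw [hB]
      simp only
      rw [hij, sym2Finsupp, Sym2.lift_mk]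
    rw [Finset.sum_congr rfl fun v' _ => by rw [hBval v']]
    have : ∀ v' : Fin d, sgn (cG v') *
        ((Finsupp.single i 1 + Finsupp.single j 1 : Fin d →₀ ℕ) v' : ℚ) =
        (if i = v' then sgn (cG v') else 0) + (if j = v' then sgn (cG v') else 0) := by
      intro v'
      simp only [Finsupp.add_apply, Finsupp.single_apply]
      split_ifs <;> push_cast <;> ring
    rw [Finset.sum_congr rfl fun v' _ => this v', Finset.sum_add_distrib,
      Finset.sum_ite_eq _ i, Finset.sum_ite_eq _ j]
    simp only [Finset.mem_univ, if_true]
    exact hsgn_add _ _ (cG.valid hadj)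
  have hgA : ∀ w, g (A w) = 0 := by
    intro w
    rw [hg_apply]
    have hAw : ∀ v', A w v' = ∑ x : {y // y ∈ mVars M}, B v' x * w x := by
      intro v'
      simp [hA, Matrix.mulVecLin_apply, Matrix.mulVec, dotProduct]
    calc ∑ v' : Fin d, sgn (cG v') * A w v'
        = ∑ v' : Fin d, ∑ x : {y // y ∈ mVars M}, sgn (cG v') * (B v' x * w x) := by
          exact Finset.sum_congr rfl fun v' _ => by rw [hAw, Finset.mul_sum]
      _ = ∑ x : {y // y ∈ mVars M}, ∑ v' : Fin d, sgn (cG v') * (B v' x * w x) :=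
          Finset.sum_comm
      _ = ∑ x : {y // y ∈ mVars M}, (∑ v' : Fin d, sgn (cG v') * B v' x) * w x := by
          refine Finset.sum_congr rfl fun x _ => ?_
          rw [Finset.sum_mul]
          exact Finset.sum_congr rfl fun v' _ => by ring
      _ = 0 := by
          rw [Finset.sum_congr rfl fun x _ => by rw [hcB x, zero_mul]]
          exact Finset.sum_const_zero
  have hA_le : LinearMap.range A ≤ LinearMap.ker g := by
    rintro _ ⟨w, rfl⟩
    exact LinearMap.mem_ker.2 (hgA w)
  have i0 : Fin d := (hGconn.nonempty).some
  have hgi0 : g (Pi.single i0 1 : Fin d → ℚ) = sgn (cG i0) := by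
    rw [hg_apply]
    have hstep : ∀ v' : Fin d, sgn (cG v') * (Pi.single i0 1 : Fin d → ℚ) v' =
        if v' = i0 then sgn (cG v') else 0 := by
      intro v'
      rw [Pi.single_apply]
      split_ifs <;> ring
    rw [Finset.sum_congr rfl fun v' _ => hstep v', Finset.sum_ite_eq' _ i0]
    simp
  have hsurj : Function.Surjective g := by
    intro r
    refine ⟨(r / sgn (cG i0)) • (Pi.single i0 1 : Fin d → ℚ), ?_⟩
    rw [map_smul, hgi0, smul_eq_mul, div_mul_cancel₀ _ (hsgn_ne _)]
  have hrk : Module.finrank ℚ (LinearMap.range g) = 1 := by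
    rw [LinearMap.range_eq_top.2 hsurj, finrank_top, Module.finrank_self]
  have hrn_g := LinearMap.finrank_range_add_finrank_ker g
  rw [Module.finrank_fintype_fun_eq_card, Fintype.card_fin, hrk] at hrn_g
  have hrange_le := Submodule.finrank_mono hA_le
  have hrn_A := LinearMap.finrank_range_add_finrank_ker A
  rw [Module.finrank_fintype_fun_eq_card, Fintype.card_coe] at hrn_A
  have hker_le : Module.finrank ℚ (LinearMap.ker A) ≤ M.card :=
    le_trans (Submodule.finrank_mono hker) (minorSpan_finrank M)
  omega

end AuxAlg

/-- If `M` is of chessboard type with `Γ_M` connected (`p` vertices, `q` edges) and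
`I_M` is the toric ideal of a connected bipartite graph `G` with `d ≤ 4p − 2q`
vertices (its number of edges being `4p − q`, the number of variables of `M`), then
`p = q + 1`, i.e. `Γ_M` is a tree. -/
theorem stmt13 (K : Type*) [Field K] (M : Finset (ℕ × ℕ)) (hM : Chessboard M)
    (hconn : (interGraph M).Connected) (p q : ℕ) (hp : M.card = p)
    (hq : (interGraph M).edgeSet.ncard = q)
    (h : ∃ (d : ℕ) (G : SimpleGraph (Fin d)) (e : mVars M → Sym2 (Fin d)),
      Function.Injective e ∧ G.edgeSet = Set.range e ∧
      G.Connected ∧ G.Colorable 2 ∧ d ≤ 4 * p - 2 * q ∧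
      idealM K M = RingHom.ker (toricMap K e).toRingHom) :
    p = q + 1 ∧ (interGraph M).IsTree := by
  classical
  obtain ⟨d, G, e, hinj, hrange, hGconn, hcol, hd, hIdeal⟩ := h
  have hcount : 4 * M.card = (mVars M).card + (interGraph M).edgeSet.ncard := chess_count hM
  have halg : (mVars M).card + 1 ≤ d + M.card :=
    algebra_bound K M G e hrange hGconn hcol hIdeal
  have hd1 : 1 ≤ d := by
    have : Nonempty (Fin d) := hGconn.nonempty
    exact (by simpa using Fintype.card_pos (α := Fin d) : 0 < d)
  have instE : Fintype (interGraph M).edgeSet := Fintype.ofFinite _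
  have hedge : (interGraph M).edgeFinset.card = (interGraph M).edgeSet.ncard :=
    (Set.ncard_eq_toFinset_card' _).symm
  obtain ⟨hle, hacyc⟩ :=
    connected_card_le ((interGraph M).edgeSet.ncard) (interGraph M) hedge hconn
  rw [Fintype.card_coe] at hle hacyc
  subst hp hq
  refine ⟨by omega, ⟨hconn, hacyc (by omega)⟩⟩
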